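/- With the setup of the penalized least-squares criterion J(β,θ) = Σᵢ (1/2)(zᵢ - Aᵢᵀβ - θᵢ)² + λΣ_{i≥i₀}|θᵢ|, the pair (β̂, θ̂) minimizes J jointly if and only if β̂ minimizes β ↦ Σ_{i≥i₀} ρ_λ(zᵢ - Aᵢᵀβ) and θ̂ᵢ = zᵢ - Aᵢᵀβ̂ for i < i₀, θ̂ᵢ = sign(zᵢ - Aᵢᵀβ̂)(|zᵢ - Aᵢᵀβ̂| - λ)₊ for i ≥ i₀. -/
import Mathlib

noncomputable def softThresh (lam c : ℝ) : ℝ := Real.sign c * max (|c| - lam) 0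

noncomputable def huber (lam u : ℝ) : ℝ :=
  if |u| ≤ lam then u^2/2 else lam * |u| - lam^2/2

lemma huber_key (lam : ℝ) (hlam : 0 < lam) (r θ : ℝ) :
    huber lam r + (θ - softThresh lam r)^2/2 ≤ (1/2) * (r - θ)^2 + lam * |θ| := by
  unfold huber softThresh
  rcases le_or_gt |r| lam with h | h
  · rw [if_pos h]
    have hm : max (|r| - lam) 0 = 0 := max_eq_right (by linarith)
    rw [hm, mul_zero]
    rcases abs_cases θ with ⟨h1, h2⟩ | ⟨h1, h2⟩ <;> rcases abs_cases r with ⟨h3, h4⟩ | ⟨h3, h4⟩ <;>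
      nlinarith
  · rw [if_neg (not_le.mpr h)]
    have hm : max (|r| - lam) 0 = |r| - lam := max_eq_left (by linarith)
    rw [hm]
    rcases lt_trichotomy r 0 with hr | hr | hr
    · rw [Real.sign_of_neg hr, abs_of_neg hr] at *
      rcases abs_cases θ with ⟨h1, h2⟩ | ⟨h1, h2⟩ <;> nlinarith
    · subst hr; simp at h; linarith
    · rw [Real.sign_of_pos hr, abs_of_pos hr] at *
      rcases abs_cases θ with ⟨h1, h2⟩ | ⟨h1, h2⟩ <;> nlinarith

lemma huber_attain (lam : ℝ) (hlam : 0 < lam) (r : ℝ) :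
    (1/2) * (r - softThresh lam r)^2 + lam * |softThresh lam r| = huber lam r := by
  unfold huber softThresh
  rcases le_or_gt |r| lam with h | h
  · rw [if_pos h]
    have hm : max (|r| - lam) 0 = 0 := max_eq_right (by linarith)
    rw [hm, mul_zero]
    simp; ring
  · rw [if_neg (not_le.mpr h)]
    have hm : max (|r| - lam) 0 = |r| - lam := max_eq_left (by linarith)
    rw [hm]
    rcases lt_trichotomy r 0 with hr | hr | hr
    · have hr' : |r| = -r := abs_of_neg hr
      rw [hr'] at h
      rw [Real.sign_of_neg hr, hr']
      rw [abs_of_nonpos (by nlinarith : (-1 : ℝ) * (-r - lam) ≤ 0)]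
      ring
    · subst hr; simp at h; linarith
    · have hr' : |r| = r := abs_of_pos hr
      rw [hr'] at h
      rw [Real.sign_of_pos hr, hr']
      rw [abs_of_nonneg (by nlinarith : (0:ℝ) ≤ 1 * (r - lam))]
      ring

theorem joint_min_iff_huber_Mest
    (n p : ℕ) (lam : ℝ) (hlam : 0 < lam)
    (A : Fin n → Fin p → ℝ) (z : Fin n → ℝ) (i0 : Fin n)
    (βhat : Fin p → ℝ) (θhat : Fin n → ℝ) :
    (∀ (β : Fin p → ℝ) (θ : Fin n → ℝ),
        (∑ i, (1/2) * (z i - (∑ j, A i j * βhat j) - θhat i)^2) +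
            lam * ∑ i ∈ Finset.univ.filter (fun i => i0 ≤ i), |θhat i|
          ≤ (∑ i, (1/2) * (z i - (∑ j, A i j * β j) - θ i)^2) +
            lam * ∑ i ∈ Finset.univ.filter (fun i => i0 ≤ i), |θ i|)
    ↔
    ((∀ β : Fin p → ℝ,
        (∑ i ∈ Finset.univ.filter (fun i => i0 ≤ i),
            huber lam (z i - (∑ j, A i j * βhat j)))
          ≤ ∑ i ∈ Finset.univ.filter (fun i => i0 ≤ i),
              huber lam (z i - (∑ j, A i j * β j))) ∧
      (∀ i : Fin n, i < i0 → θhat i = z i - (∑ j, A i j * βhat j)) ∧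
      (∀ i : Fin n, i0 ≤ i → θhat i = softThresh lam (z i - (∑ j, A i j * βhat j)))) := by
  classical
  set S : Finset (Fin n) := Finset.univ.filter (fun i => i0 ≤ i) with hS
  set Sc : Finset (Fin n) := Finset.univ.filter (fun i => ¬ i0 ≤ i) with hSc
  have split : ∀ (β : Fin p → ℝ) (θ : Fin n → ℝ),
      (∑ i, (1/2) * (z i - (∑ j, A i j * β j) - θ i)^2) + lam * ∑ i ∈ S, |θ i|
      = (∑ i ∈ Sc, (1/2) * (z i - (∑ j, A i j * β j) - θ i)^2)
        + ∑ i ∈ S, ((1/2) * (z i - (∑ j, A i j * β j) - θ i)^2 + lam * |θ i|) := by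
    intro β θ
    rw [← Finset.sum_filter_add_sum_filter_not Finset.univ (fun i => i0 ≤ i)
        (fun i => (1/2) * (z i - (∑ j, A i j * β j) - θ i)^2), Finset.mul_sum,
        Finset.sum_add_distrib]
    ring
  have lower : ∀ (β : Fin p → ℝ) (θ : Fin n → ℝ),
      (∑ i ∈ S, huber lam (z i - ∑ j, A i j * β j))
        + ((∑ i ∈ Sc, (1/2) * (z i - (∑ j, A i j * β j) - θ i)^2)
          + ∑ i ∈ S, (θ i - softThresh lam (z i - ∑ j, A i j * β j))^2/2)
      ≤ (∑ i, (1/2) * (z i - (∑ j, A i j * β j) - θ i)^2) + lam * ∑ i ∈ S, |θ i| := by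
    intro β θ
    rw [split β θ]
    have h1 : ∑ i ∈ S, (huber lam (z i - ∑ j, A i j * β j)
          + (θ i - softThresh lam (z i - ∑ j, A i j * β j))^2/2)
        ≤ ∑ i ∈ S, ((1/2) * (z i - (∑ j, A i j * β j) - θ i)^2 + lam * |θ i|) :=
      Finset.sum_le_sum fun i _ => huber_key lam hlam _ _
    rw [Finset.sum_add_distrib] at h1
    linarith
  set θs : (Fin p → ℝ) → Fin n → ℝ := fun β i =>
    if i0 ≤ i then softThresh lam (z i - ∑ j, A i j * β j)
    else z i - ∑ j, A i j * β j with hθs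
  have attain : ∀ β : Fin p → ℝ,
      (∑ i, (1/2) * (z i - (∑ j, A i j * β j) - θs β i)^2) + lam * ∑ i ∈ S, |θs β i|
      = ∑ i ∈ S, huber lam (z i - ∑ j, A i j * β j) := by
    intro β
    rw [split β (θs β)]
    have h1 : ∑ i ∈ Sc, (1/2) * (z i - (∑ j, A i j * β j) - θs β i)^2 = 0 := by
      apply Finset.sum_eq_zero
      intro i hi
      rw [hSc, Finset.mem_filter] at hi
      simp [hθs, if_neg hi.2]
    have h2 : ∀ i ∈ S, (1/2) * (z i - (∑ j, A i j * β j) - θs β i)^2 + lam * |θs β i|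
        = huber lam (z i - ∑ j, A i j * β j) := by
      intro i hi
      rw [hS, Finset.mem_filter] at hi
      simp only [hθs, if_pos hi.2]
      exact huber_attain lam hlam _
    rw [h1, Finset.sum_congr rfl h2, zero_add]
  have nn1 : ∀ (β : Fin p → ℝ) (θ : Fin n → ℝ),
      0 ≤ ∑ i ∈ Sc, (1/2) * (z i - (∑ j, A i j * β j) - θ i)^2 :=
    fun β θ => Finset.sum_nonneg fun i _ => by positivity
  have nn2 : ∀ (β : Fin p → ℝ) (θ : Fin n → ℝ),
      0 ≤ ∑ i ∈ S, (θ i - softThresh lam (z i - ∑ j, A i j * β j))^2/2 :=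
    fun β θ => Finset.sum_nonneg fun i _ => by positivity
  constructor
  · intro h
    have hub : ∑ i ∈ S, huber lam (z i - ∑ j, A i j * βhat j)
        ≤ (∑ i, (1/2) * (z i - (∑ j, A i j * βhat j) - θhat i)^2)
          + lam * ∑ i ∈ S, |θhat i| := by
      have := lower βhat θhat
      linarith [nn1 βhat θhat, nn2 βhat θhat]
    have hle : (∑ i, (1/2) * (z i - (∑ j, A i j * βhat j) - θhat i)^2)
          + lam * ∑ i ∈ S, |θhat i|
        ≤ ∑ i ∈ S, huber lam (z i - ∑ j, A i j * βhat j) := by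
      have := h βhat (θs βhat)
      rw [attain βhat] at this
      exact this
    have hzero : (∑ i ∈ Sc, (1/2) * (z i - (∑ j, A i j * βhat j) - θhat i)^2) = 0
        ∧ (∑ i ∈ S, (θhat i - softThresh lam (z i - ∑ j, A i j * βhat j))^2/2) = 0 := by
      have := lower βhat θhat
      constructor <;> linarith [nn1 βhat θhat, nn2 βhat θhat]
    refine ⟨?_, ?_, ?_⟩
    · intro β
      have h1 := h β (θs β)
      rw [attain β] at h1
      linarith [hub]
    · intro i hi
      have hmem : i ∈ Sc := by
        rw [hSc, Finset.mem_filter]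
        exact ⟨Finset.mem_univ i, not_le.mpr hi⟩
      have := (Finset.sum_eq_zero_iff_of_nonneg
        (fun i _ => by positivity)).mp hzero.1 i hmem
      have h2 : (z i - (∑ j, A i j * βhat j) - θhat i)^2 = 0 := by linarith
      have h3 := pow_eq_zero_iff (n := 2) (by norm_num) |>.mp h2
      linarith
    · intro i hi
      have hmem : i ∈ S := by
        rw [hS, Finset.mem_filter]
        exact ⟨Finset.mem_univ i, hi⟩
      have := (Finset.sum_eq_zero_iff_of_nonneg
        (fun i _ => by positivity)).mp hzero.2 i hmem
      have h2 : (θhat i - softThresh lam (z i - ∑ j, A i j * βhat j))^2 = 0 := by linarith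
      have h3 := pow_eq_zero_iff (n := 2) (by norm_num) |>.mp h2
      linarith
  · rintro ⟨h1, h2, h3⟩ β θ
    have hθ : θhat = θs βhat := by
      funext i
      by_cases hi : i0 ≤ i
      · rw [h3 i hi]; simp [hθs, if_pos hi]
      · rw [h2 i (lt_of_not_ge hi)]; simp [hθs, if_neg hi]
    rw [hθ, attain βhat]
    have := lower β θ
    have := h1 β
    linarith [nn1 β θ, nn2 β θ]
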